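/- Time-of-day pricing equilibrium existence and uniqueness: Under the same measure-theoretic and regularity assumptions as in the fixed-budget case, but with constant unit reward r ≥ 0 — i.e., x_θ(G) is the clamp of (c'_θ)⁻¹(r - h(G)) to [0,d] — the fixed-point equation ∫_Θ x_θ(G) dμ(θ) = G has exactly one solution G ∈ [0,D]. -/

import Mathlib

open Set MeasureTheory

/-- time-of-day pricing equilibrium. Under the same assumptions as the
fixed-budget case but with constant unit reward `r ≥ 0` — the per-type best response
`x θ G` is the clamp of `(c'_θ)⁻¹(r - h G)` to `[0,d]` — the fixed-point equation
`∫ x θ G dμ = G` has exactly one solution `G ∈ [0,D]`. -/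
theorem stmt_7 {Θ : Type*} [MeasurableSpace Θ] (μ : Measure Θ) [IsFiniteMeasure μ]
    (d D : ℝ) (hd : 0 < d) (hD : D = d * (μ Set.univ).toReal)
    (h : ℝ → ℝ)
    (hhcont : ContinuousOn h (Icc 0 D)) (hhmono : StrictMonoOn h (Icc 0 D))
    (c : Θ → ℝ → ℝ)
    (hcdiff : ∀ θ, DifferentiableOn ℝ (c θ) (Icc 0 d))
    (hc'cont : ∀ θ, ContinuousOn (deriv (c θ)) (Icc 0 d))
    (hc'mono : ∀ θ, StrictMonoOn (deriv (c θ)) (Icc 0 d))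
    (Cb : ℝ) (hCb : ∀ θ, deriv (c θ) d ≤ Cb)
    (r : ℝ) (hr : 0 ≤ r)
    (x : Θ → ℝ → ℝ)
    (hxmeas : ∀ G, Measurable fun θ => x θ G)
    (hx : ∀ θ, ∀ G ∈ Icc (0:ℝ) D,
      (r - h G ≤ deriv (c θ) 0 → x θ G = 0) ∧
      (deriv (c θ) d ≤ r - h G → x θ G = d) ∧
      (deriv (c θ) 0 < r - h G → r - h G < deriv (c θ) d →
        x θ G ∈ Ioo 0 d ∧ deriv (c θ) (x θ G) = r - h G)) :
    ∃! G, G ∈ Icc (0:ℝ) D ∧ (∫ θ, x θ G ∂μ) = G := by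
  have hD0 : 0 ≤ D := by
    rw [hD]; positivity
  have h0d : (0:ℝ) ∈ Icc (0:ℝ) d := ⟨le_refl _, hd.le⟩
  have hdd : d ∈ Icc (0:ℝ) d := ⟨hd.le, le_refl _⟩
  -- characterization of x θ G
  have hchar : ∀ θ, ∀ G ∈ Icc (0:ℝ) D, x θ G ∈ Icc 0 d ∧
      (∀ z ∈ Icc (0:ℝ) d, z < x θ G → deriv (c θ) z < r - h G) ∧
      (∀ z ∈ Icc (0:ℝ) d, x θ G < z → r - h G < deriv (c θ) z) := by
    intro θ G hG
    obtain ⟨h0, hdle, hint⟩ := hx θ G hG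
    rcases le_or_gt (r - h G) (deriv (c θ) 0) with h1 | h1
    · have hx0 := h0 h1
      refine ⟨by rw [hx0]; exact h0d, ?_, ?_⟩
      · intro z hz hlt; rw [hx0] at hlt; exact absurd hlt (not_lt.2 hz.1)
      · intro z hz hlt; rw [hx0] at hlt
        exact lt_of_le_of_lt h1 (hc'mono θ h0d hz hlt)
    · rcases le_or_gt (deriv (c θ) d) (r - h G) with h2 | h2
      · have hxd := hdle h2
        refine ⟨by rw [hxd]; exact hdd, ?_, ?_⟩
        · intro z hz hlt; rw [hxd] at hlt
          exact lt_of_lt_of_le (hc'mono θ hz hdd hlt) h2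
        · intro z hz hlt; rw [hxd] at hlt; exact absurd hlt (not_lt.2 hz.2)
      · obtain ⟨hmem, heq⟩ := hint h1 h2
        have hmem' : x θ G ∈ Icc (0:ℝ) d := ⟨hmem.1.le, hmem.2.le⟩
        refine ⟨hmem', ?_, ?_⟩
        · intro z hz hlt; rw [← heq]; exact hc'mono θ hz hmem' hlt
        · intro z hz hlt; rw [← heq]; exact hc'mono θ hmem' hz hlt
  -- monotonicity: bigger G (smaller r - h G) gives smaller x
  have hmono : ∀ θ, ∀ G1 ∈ Icc (0:ℝ) D, ∀ G2 ∈ Icc (0:ℝ) D, G1 < G2 →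
      x θ G2 ≤ x θ G1 := by
    intro θ G1 hG1 G2 hG2 h12
    by_contra hcon
    push_neg at hcon
    obtain ⟨hm1, hlo1, hhi1⟩ := hchar θ G1 hG1
    obtain ⟨hm2, hlo2, hhi2⟩ := hchar θ G2 hG2
    set z := (x θ G1 + x θ G2) / 2 with hz
    have hz1 : x θ G1 < z := by simp only [hz]; linarith
    have hz2 : z < x θ G2 := by simp only [hz]; linarith
    have hzm : z ∈ Icc (0:ℝ) d := ⟨by linarith [hm1.1, hm2.1], by linarith [hm1.2, hm2.2]⟩
    have a1 := hhi1 z hzm hz1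
    have a2 := hlo2 z hzm hz2
    have : h G1 < h G2 := hhmono hG1 hG2 h12
    linarith
  -- continuity of x θ · on Icc 0 D, via h-closeness
  have key : ∀ θ, ∀ G ∈ Icc (0:ℝ) D, ∀ ε > (0:ℝ), ∃ δ > (0:ℝ),
      ∀ G' ∈ Icc (0:ℝ) D, |h G' - h G| < δ → |x θ G' - x θ G| < ε := by
    intro θ G hG ε hε
    obtain ⟨hm, hlo, hhi⟩ := hchar θ G hG
    -- upper bound δu
    obtain ⟨δu, hδu, hup⟩ : ∃ δu > (0:ℝ), ∀ G' ∈ Icc (0:ℝ) D, |h G' - h G| < δu →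
        x θ G' - x θ G < ε := by
      by_cases hu : x θ G + ε ≤ d
      · set z := x θ G + ε / 2 with hzdef
        have hzm : z ∈ Icc (0:ℝ) d := ⟨by simp only [hzdef]; linarith [hm.1], by
          simp only [hzdef]; linarith⟩
        have hc : r - h G < deriv (c θ) z := hhi z hzm (by simp only [hzdef]; linarith)
        refine ⟨deriv (c θ) z - (r - h G), by linarith, ?_⟩
        intro G' hG' hcl
        obtain ⟨hm', hlo', hhi'⟩ := hchar θ G' hG'
        by_contra hcon
        push_neg at hcon
        have hzx : z < x θ G' := by simp only [hzdef]; linarith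
        have := hlo' z hzm hzx
        rw [abs_lt] at hcl
        linarith
      · refine ⟨1, one_pos, ?_⟩
        intro G' hG' _
        have := (hchar θ G' hG').1.2
        push_neg at hu
        linarith
    -- lower bound δl
    obtain ⟨δl, hδl, hdn⟩ : ∃ δl > (0:ℝ), ∀ G' ∈ Icc (0:ℝ) D, |h G' - h G| < δl →
        x θ G - x θ G' < ε := by
      by_cases hl : ε ≤ x θ G
      · set z := x θ G - ε / 2 with hzdef
        have hzm : z ∈ Icc (0:ℝ) d := ⟨by simp only [hzdef]; linarith, by
          simp only [hzdef]; linarith [hm.2]⟩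
        have hc : deriv (c θ) z < r - h G := hlo z hzm (by simp only [hzdef]; linarith)
        refine ⟨(r - h G) - deriv (c θ) z, by linarith, ?_⟩
        intro G' hG' hcl
        obtain ⟨hm', hlo', hhi'⟩ := hchar θ G' hG'
        by_contra hcon
        push_neg at hcon
        have hzx : x θ G' < z := by simp only [hzdef]; linarith
        have := hhi' z hzm hzx
        rw [abs_lt] at hcl
        linarith
      · refine ⟨1, one_pos, ?_⟩
        intro G' hG' _
        have := (hchar θ G' hG').1.1
        push_neg at hl
        linarith
    refine ⟨min δu δl, lt_min hδu hδl, ?_⟩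
    intro G' hG' hcl
    rw [abs_lt]
    constructor
    · have := hdn G' hG' (lt_of_lt_of_le hcl (min_le_right _ _)); linarith
    · have := hup G' hG' (lt_of_lt_of_le hcl (min_le_left _ _)); linarith
  have hxcont : ∀ θ, ContinuousOn (fun G => x θ G) (Icc (0:ℝ) D) := by
    intro θ G hG
    rw [Metric.continuousWithinAt_iff]
    intro ε hε
    obtain ⟨δ, hδ, hkey⟩ := key θ G hG ε hε
    have hh := hhcont G hG
    rw [Metric.continuousWithinAt_iff] at hh
    obtain ⟨δ', hδ', hh'⟩ := hh δ hδ
    refine ⟨δ', hδ', ?_⟩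
    intro G' hG' hdist
    have hcl := hh' hG' hdist
    rw [Real.dist_eq] at hcl
    rw [Real.dist_eq]
    exact hkey G' hG' hcl
  -- integrability and bounds
  have hxint : ∀ G ∈ Icc (0:ℝ) D, Integrable (fun θ => x θ G) μ := by
    intro G hG
    refine (integrable_const d).mono' (hxmeas G).aestronglyMeasurable ?_
    exact ae_of_all _ fun θ => by
      have := (hchar θ G hG).1
      rw [Real.norm_eq_abs, abs_le]
      exact ⟨by linarith [this.1], this.2⟩
  -- continuity of the integral
  set Φ : ℝ → ℝ := fun G => ∫ θ, x θ G ∂μ with hΦ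
  have hΦcont : ContinuousOn Φ (Icc (0:ℝ) D) := by
    apply continuousOn_of_dominated (bound := fun _ => d)
    · exact fun G _ => (hxmeas G).aestronglyMeasurable
    · intro G hG
      exact ae_of_all _ fun θ => by
        have := (hchar θ G hG).1
        rw [Real.norm_eq_abs, abs_le]
        exact ⟨by linarith [this.1], this.2⟩
    · exact integrable_const d
    · exact ae_of_all _ fun θ => hxcont θ
  have h0mem : (0:ℝ) ∈ Icc (0:ℝ) D := ⟨le_refl _, hD0⟩
  have hDmem : D ∈ Icc (0:ℝ) D := ⟨hD0, le_refl _⟩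
  -- endpoint values
  have hΦ0 : 0 ≤ Φ 0 := integral_nonneg fun θ => (hchar θ 0 h0mem).1.1
  have hΦD : Φ D ≤ D := by
    have : Φ D ≤ ∫ _θ, d ∂μ := by
      apply integral_mono (hxint D hDmem) (integrable_const d)
      exact fun θ => (hchar θ D hDmem).1.2
    rwa [integral_const, smul_eq_mul, mul_comm, measureReal_def, ← hD] at this
  -- existence via IVT
  have hFcont : ContinuousOn (fun G => Φ G - G) (Icc (0:ℝ) D) :=
    hΦcont.sub continuousOn_id
  have hivt := intermediate_value_Icc' hD0 hFcont
  have h0img : (0:ℝ) ∈ Icc (Φ D - D) (Φ 0 - 0) := ⟨by linarith, by linarith⟩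
  obtain ⟨G, hGmem, hGfix⟩ := hivt h0img
  have hfix : Φ G = G := by linarith [sub_eq_zero.mp hGfix]
  refine ⟨G, ⟨hGmem, hfix⟩, ?_⟩
  -- uniqueness
  intro G' ⟨hG'mem, hG'fix⟩
  have hG'fix' : Φ G' = G' := hG'fix
  by_contra hne
  rcases lt_or_gt_of_ne hne with hlt | hlt
  · have : Φ G ≤ Φ G' :=
      integral_mono (hxint G hGmem) (hxint G' hG'mem)
        (fun θ => hmono θ G' hG'mem G hGmem hlt)
    rw [hfix, hG'fix'] at this
    linarith
  · have : Φ G' ≤ Φ G :=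
      integral_mono (hxint G' hG'mem) (hxint G hGmem)
        (fun θ => hmono θ G hGmem G' hG'mem hlt)
    rw [hfix, hG'fix'] at this
    linarith
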